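/- Let n ≥ 2 and let ε be a rational number with 0 < ε < (2n−1)/(n(n+1)). Define θ⁻₁ = 1/n − ε and θ⁻ᵢ = 1/n + ε/(2n−1) for i = 2,…,2n. Then: (i) for every non-empty proper subset I ⊆ {1,…,2n}, ∑_{i∈I} θ⁻ᵢ ≠ 1; (ii) for every subset I ⊆ {1,…,2n}, ∑_{i∈I} θ⁻ᵢ > 1 if and only if |I| > n, or |I| = n and 1 ∉ I. -/

import Mathlib

/-- Lemma 3.2 (θ⁻-part): with θ⁻₁ = 1/n − ε and θ⁻ᵢ = 1/n + ε/(2n−1) for i ≥ 2,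
and 0 < ε < (2n−1)/(n(n+1)): (i) d = (1,…,1;2) is θ⁻-coprime, and (ii) a subset I
is θ⁻-forbidden iff |I| > n, or |I| = n and 1 ∉ I. -/
theorem stmt4 (n : ℕ) (hn : 2 ≤ n) (ε : ℚ) (hε0 : 0 < ε)
    (hε : ε < (2 * (n : ℚ) - 1) / ((n : ℚ) * ((n : ℚ) + 1)))
    (θ : Fin (2 * n) → ℚ)
    (hθ : ∀ i : Fin (2 * n),
      θ i = if (i : ℕ) = 0 then 1 / (n : ℚ) - ε else 1 / (n : ℚ) + ε / (2 * (n : ℚ) - 1)) :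
    (∀ I : Finset (Fin (2 * n)), I ≠ ∅ → I ≠ Finset.univ → ∑ i ∈ I, θ i ≠ 1) ∧
    (∀ I : Finset (Fin (2 * n)),
      1 < ∑ i ∈ I, θ i ↔
        (n < I.card ∨ (I.card = n ∧ (⟨0, by omega⟩ : Fin (2 * n)) ∉ I))) := by
  have hpos : 0 < 2 * n := by omega
  set z : Fin (2 * n) := ⟨0, by omega⟩ with hz
  have hn2 : (2:ℚ) ≤ (n:ℚ) := by exact_mod_cast hn
  have hnq : (0:ℚ) < (n:ℚ) := by linarith
  have hden : (0:ℚ) < 2*(n:ℚ) - 1 := by linarith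
  have hε' : ε * ((n:ℚ) * ((n:ℚ)+1)) < 2*(n:ℚ) - 1 := by
    exact (lt_div_iff₀ (by positivity)).mp hε
  have key : ∀ I : Finset (Fin (2*n)), ∑ i ∈ I, θ i
      = I.card * (1/(n:ℚ) + ε/(2*(n:ℚ)-1))
        - (if z ∈ I then 2*(n:ℚ)*ε/(2*(n:ℚ)-1) else 0) := by
    intro I
    have h1 : ∀ i ∈ I, θ i = (1/(n:ℚ) + ε/(2*(n:ℚ)-1))
        - (if i = z then 2*(n:ℚ)*ε/(2*(n:ℚ)-1) else 0) := by
      intro i _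
      rw [hθ i]
      by_cases h : (i:ℕ) = 0
      · have hiz : i = z := by
          apply Fin.ext; simp [h, hz]
        rw [if_pos h, if_pos hiz]
        linarith [show ε/(2*(n:ℚ)-1) - 2*(n:ℚ)*ε/(2*(n:ℚ)-1) = -ε by
          rw [← sub_div, div_eq_iff hden.ne']; ring]
      · have hiz : i ≠ z := fun he => h (by rw [he])
        simp [h, hiz]
    rw [Finset.sum_congr rfl h1, Finset.sum_sub_distrib, Finset.sum_const,
      Finset.sum_ite_eq' I z, nsmul_eq_mul]
  -- core inequalities
  have hcard : ∀ I : Finset (Fin (2*n)), (I.card : ℚ) ≤ 2*(n:ℚ) := by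
    intro I
    have := Finset.card_le_card (Finset.subset_univ I)
    rw [Finset.card_univ, Fintype.card_fin] at this
    exact_mod_cast this
  have main : ∀ I : Finset (Fin (2*n)),
      (((n < I.card ∨ (I.card = n ∧ z ∉ I)) → 1 < ∑ i ∈ I, θ i) ∧
       (¬(n < I.card ∨ (I.card = n ∧ z ∉ I)) → ∑ i ∈ I, θ i < 1)) := by
    intro I
    rw [key I]
    have hk2 := hcard I
    have ha : (n:ℚ) * (1/(n:ℚ)) = 1 := by field_simp
    have hb : (2*(n:ℚ)-1) * (1/(2*(n:ℚ)-1)) = 1 := by field_simp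
    have hapos : (0:ℚ) < 1/(n:ℚ) := by positivity
    have hbpos : (0:ℚ) < 1/(2*(n:ℚ)-1) := by positivity
    by_cases hzI : z ∈ I
    · simp only [hzI, if_true, not_true, and_false, or_false]
      have e1 : ε/(2*(n:ℚ)-1) = ε * (1/(2*(n:ℚ)-1)) := by ring
      have e2 : 2*(n:ℚ)*ε/(2*(n:ℚ)-1) = 2*(n:ℚ)*(ε * (1/(2*(n:ℚ)-1))) := by ring
      rw [e1, e2]
      have key2 : ((n:ℚ)-1) * (ε * (1/(2*(n:ℚ)-1))) * (n:ℚ) < 1 := by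
        nlinarith [mul_pos hε0 hbpos, mul_lt_mul_of_pos_right hε' hbpos]
      have h3 : ((n:ℚ)-1) * (ε * (1/(2*(n:ℚ)-1))) < 1/(n:ℚ) := by
        have h4 : (n:ℚ) * (((n:ℚ)-1) * (ε * (1/(2*(n:ℚ)-1)))) < (n:ℚ) * (1/(n:ℚ)) := by
          rw [ha]; linarith [key2]
        exact lt_of_mul_lt_mul_left h4 (le_of_lt hnq)
      have hεb : 0 < ε * (1/(2*(n:ℚ)-1)) := mul_pos hε0 hbpos
      constructor
      · intro hlt
        have hk : (n:ℚ) + 1 ≤ (I.card : ℚ) := by exact_mod_cast hlt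
        have h5 : (2*(n:ℚ) - (I.card:ℚ)) * (ε * (1/(2*(n:ℚ)-1)))
            ≤ ((n:ℚ)-1) * (ε * (1/(2*(n:ℚ)-1))) :=
          mul_le_mul_of_nonneg_right (by linarith) (le_of_lt hεb)
        have h6 : ((n:ℚ)+1) * (1/(n:ℚ)) ≤ (I.card:ℚ) * (1/(n:ℚ)) :=
          mul_le_mul_of_nonneg_right hk (le_of_lt hapos)
        have e3 : (2*(n:ℚ) - (I.card:ℚ)) * (ε * (1/(2*(n:ℚ)-1)))
            = 2*(n:ℚ)*(ε * (1/(2*(n:ℚ)-1))) - (I.card:ℚ)*(ε * (1/(2*(n:ℚ)-1))) := by ring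
        have e4 : ((n:ℚ)-1) * (ε * (1/(2*(n:ℚ)-1)))
            = (n:ℚ)*(ε * (1/(2*(n:ℚ)-1))) - ε * (1/(2*(n:ℚ)-1)) := by ring
        have e5 : (I.card:ℚ) * (1/(n:ℚ) + ε * (1/(2*(n:ℚ)-1)))
            = (I.card:ℚ)*(1/(n:ℚ)) + (I.card:ℚ)*(ε * (1/(2*(n:ℚ)-1))) := by ring
        have e6 : ((n:ℚ)+1) * (1/(n:ℚ)) = (n:ℚ)*(1/(n:ℚ)) + 1/(n:ℚ) := by ring
        linarith [ha]
      · intro hnk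
        have hk : (I.card : ℚ) ≤ (n:ℚ) := by exact_mod_cast Nat.not_lt.mp hnk
        have h6 : (I.card:ℚ) * (1/(n:ℚ)) ≤ (n:ℚ) * (1/(n:ℚ)) :=
          mul_le_mul_of_nonneg_right hk (le_of_lt hapos)
        have h5 : 0 < (2*(n:ℚ) - (I.card:ℚ)) * (ε * (1/(2*(n:ℚ)-1))) :=
          mul_pos (by linarith) hεb
        have e3 : (2*(n:ℚ) - (I.card:ℚ)) * (ε * (1/(2*(n:ℚ)-1)))
            = 2*(n:ℚ)*(ε * (1/(2*(n:ℚ)-1))) - (I.card:ℚ)*(ε * (1/(2*(n:ℚ)-1))) := by ring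
        have e5 : (I.card:ℚ) * (1/(n:ℚ) + ε * (1/(2*(n:ℚ)-1)))
            = (I.card:ℚ)*(1/(n:ℚ)) + (I.card:ℚ)*(ε * (1/(2*(n:ℚ)-1))) := by ring
        linarith [ha]
    · simp only [hzI, if_false, not_false_iff, and_true, sub_zero]
      have hcond : (n < I.card ∨ I.card = n) ↔ n ≤ I.card := by omega
      rw [hcond]
      constructor
      · intro hle
        have hk : (n:ℚ) ≤ (I.card : ℚ) := by exact_mod_cast hle
        have e1 : ε/(2*(n:ℚ)-1) = ε * (1/(2*(n:ℚ)-1)) := by ring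
        rw [e1]
        nlinarith [mul_pos hε0 hbpos, mul_le_mul_of_nonneg_right hk
          (le_of_lt (add_pos hapos (mul_pos hε0 hbpos)))]
      · intro hnk
        have hk : (I.card : ℚ) ≤ (n:ℚ) - 1 := by
          have : I.card + 1 ≤ n := by omega
          have := (Nat.cast_le (α := ℚ)).mpr this
          push_cast at this; linarith
        have e1 : ε/(2*(n:ℚ)-1) = ε * (1/(2*(n:ℚ)-1)) := by ring
        rw [e1]
        have key2 : ((n:ℚ)-1) * (ε * (1/(2*(n:ℚ)-1))) * (n:ℚ) < 1 := by
          nlinarith [mul_pos hε0 hbpos, mul_lt_mul_of_pos_right hε' hbpos]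
        have hkpos : (0:ℚ) ≤ (I.card : ℚ) := Nat.cast_nonneg _
        nlinarith [mul_lt_mul_of_pos_right key2 hapos, mul_pos hε0 hbpos,
          mul_le_mul_of_nonneg_right hk (le_of_lt (add_pos hapos (mul_pos hε0 hbpos)))]
  constructor
  · intro I _ _ heq
    rcases (main I) with ⟨h1, h2⟩
    by_cases hc : (n < I.card ∨ (I.card = n ∧ z ∉ I))
    · exact absurd heq (by have := h1 hc; linarith)
    · exact absurd heq (by have := h2 hc; linarith)
  · intro I
    rcases (main I) with ⟨h1, h2⟩
    constructor
    · intro hlt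
      by_contra hc
      exact absurd hlt (by have := h2 hc; linarith)
    · exact h1
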